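/- arXiv:2312.12822 — 3 statements merged into one kernel-verified Lean document; each statement's English description precedes it below -/
import Mathlib

section
/- The reduced free group RF(n) is nilpotent of class at most n. -/
open scoped commutatorElement


/-- The relations defining the reduced free group `RF(n)`. -/
def rfRels (n : ℕ) : Set (FreeGroup (Fin n)) :=
  {r | ∃ (i : Fin n) (g : FreeGroup (Fin n)),
    r = ⁅FreeGroup.of i, g * FreeGroup.of i * g⁻¹⁆}

/-- The reduced free group `RF(n)`. -/
abbrev ReducedFreeGroup (n : ℕ) : Type := PresentedGroup (rfRels n)

namespace RFAux

open Subgroup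

/-- The defining relation holds in `RF(m)`. -/
lemma rel_mk {m : ℕ} (i : Fin m) (g : FreeGroup (Fin m)) :
    (PresentedGroup.mk (rfRels m)) ⁅FreeGroup.of i, g * FreeGroup.of i * g⁻¹⁆ = 1 := by
  apply (QuotientGroup.eq_one_iff _).mpr
  exact Subgroup.subset_normalClosure ⟨i, g, rfl⟩

/-- Any two conjugates of a generator commute in `RF(m)`. -/
lemma conj_comm {m : ℕ} (i : Fin m) (a b : ReducedFreeGroup m) :
    ⁅a * PresentedGroup.of i * a⁻¹, b * PresentedGroup.of i * b⁻¹⁆ = 1 := by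
  obtain ⟨c, hc⟩ := PresentedGroup.mk_surjective (rfRels m) (a⁻¹ * b)
  have h1 := rel_mk i c
  rw [map_commutatorElement] at h1
  simp only [map_mul, map_inv, hc] at h1
  have key : (⁅a * PresentedGroup.of i * a⁻¹, b * PresentedGroup.of i * b⁻¹⁆ :
      ReducedFreeGroup m) =
      a * ⁅(PresentedGroup.mk (rfRels m)) (FreeGroup.of i),
        (a⁻¹ * b) * (PresentedGroup.mk (rfRels m)) (FreeGroup.of i) * (a⁻¹ * b)⁻¹⁆ * a⁻¹ := by
    show _ = a * ⁅(PresentedGroup.of i : ReducedFreeGroup m),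
        (a⁻¹ * b) * PresentedGroup.of i * (a⁻¹ * b)⁻¹⁆ * a⁻¹
    simp only [commutatorElement_def]
    group
  rw [key, h1]
  group

/-- A generator commutes with each of its conjugates. -/
lemma rel_holds {m : ℕ} (i : Fin m) (a : ReducedFreeGroup m) :
    ⁅(PresentedGroup.of i : ReducedFreeGroup m), a * PresentedGroup.of i * a⁻¹⁆ = 1 := by
  have := conj_comm i 1 a
  simpa using this

/-- The image of the lower central series under a surjective hom. -/
lemma lcs_map_eq {G H : Type*} [Group G] [Group H] (f : G →* H)
    (hf : Function.Surjective f) (k : ℕ) :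
    ((⊤ : Subgroup G).lowerCentralSeries k).map f = (⊤ : Subgroup H).lowerCentralSeries k := by
  induction k with
  | zero => simpa using Subgroup.map_top_of_surjective f hf
  | succ k ih =>
      show ((⁅(⊤ : Subgroup G).lowerCentralSeries k, (⊤ : Subgroup G)⁆ : Subgroup G).map f) =
        ⁅(⊤ : Subgroup H).lowerCentralSeries k, (⊤ : Subgroup H)⁆
      rw [Subgroup.map_commutator, ih, Subgroup.map_top_of_surjective f hf]

/-- The normal closure of a generator is contained in the centralizer of the generator. -/
lemma normalClosure_le_centralizer {m : ℕ} (i : Fin m) :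
    normalClosure {(PresentedGroup.of i : ReducedFreeGroup m)} ≤
      centralizer {(PresentedGroup.of i : ReducedFreeGroup m)} := by
  show Subgroup.closure (Group.conjugatesOfSet _) ≤ _
  rw [Subgroup.closure_le]
  intro x hx
  rw [Group.mem_conjugatesOfSet_iff] at hx
  obtain ⟨a, ha, hconj⟩ := hx
  rw [Set.mem_singleton_iff] at ha
  subst ha
  obtain ⟨c, hc⟩ := isConj_iff.mp hconj
  show x ∈ centralizer {(PresentedGroup.of i : ReducedFreeGroup m)}
  rw [Subgroup.mem_centralizer_iff]
  intro y hy
  rw [Set.mem_singleton_iff] at hy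
  subst hy
  have := rel_holds i c
  rw [commutatorElement_eq_one_iff_commute] at this
  rw [← hc]
  exact this.eq

end RFAux

/-- The reduced free group `RF(n)` is nilpotent of class at most `n`:
the `(n+1)`-st term of its lower central series (with the convention `Γ₁ G = G`,
i.e. `(⊤ : Subgroup G).lowerCentralSeries 0 = ⊤` in Mathlib) is trivial. -/
theorem reducedFreeGroup_nilpotent (n : ℕ) :
    (⊤ : Subgroup (ReducedFreeGroup n)).lowerCentralSeries n = ⊥ := by
  induction n with
  | zero =>
      have : Subsingleton (ReducedFreeGroup 0) :=
        (PresentedGroup.mk_surjective (rfRels 0)).subsingleton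
      ext x
      simp [Subsingleton.elim x 1, Subgroup.one_mem]
  | succ n ih =>
      set G := ReducedFreeGroup (n + 1)
      -- Step 1: γ_n(G) ≤ normal closure of each generator.
      have key : ∀ i : Fin (n + 1), (⊤ : Subgroup G).lowerCentralSeries n ≤
          Subgroup.normalClosure {(PresentedGroup.of i : G)} := by
        intro i
        set N := Subgroup.normalClosure {(PresentedGroup.of i : G)} with hN
        haveI : N.Normal := Subgroup.normalClosure_normal
        set q : G →* G ⧸ N := QuotientGroup.mk' N with hq
        have hqsurj : Function.Surjective q := QuotientGroup.mk'_surjective N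
        -- the map σ : RF(n) → G ⧸ N
        have hrels : ∀ r ∈ rfRels n,
            FreeGroup.lift (fun j : Fin n => q (PresentedGroup.of (i.succAbove j))) r = 1 := by
          rintro r ⟨j, g, rfl⟩
          rw [map_commutatorElement]
          simp only [map_mul, map_inv, FreeGroup.lift_apply_of]
          obtain ⟨c, hc⟩ := hqsurj (FreeGroup.lift
            (fun j : Fin n => q (PresentedGroup.of (i.succAbove j))) g)
          rw [← hc, ← map_inv, ← map_mul, ← map_mul, ← map_commutatorElement,
            RFAux.rel_holds (i.succAbove j) c, map_one]
        set σ : ReducedFreeGroup n →* G ⧸ N := PresentedGroup.toGroup hrels with hσdef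
        have hσsurj : Function.Surjective σ := by
          rw [← MonoidHom.range_eq_top, eq_top_iff]
          intro x _
          induction x using QuotientGroup.induction_on with
          | H z =>
            have hz : z ∈ σ.range.comap q := by
              refine PresentedGroup.generated_by _ _ ?_ z
              intro k
              simp only [Subgroup.mem_comap]
              rcases eq_or_ne k i with rfl | hk
              · have : q (PresentedGroup.of k) = 1 := by
                  rw [hq, QuotientGroup.mk'_apply, QuotientGroup.eq_one_iff]
                  exact Subgroup.subset_normalClosure rfl
                rw [this]; exact one_mem _
              · obtain ⟨j, hj⟩ := Fin.exists_succAbove_eq hk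
                refine ⟨PresentedGroup.of j, ?_⟩
                rw [hσdef, PresentedGroup.toGroup.of, hj]
            exact hz
        have hQ : (⊤ : Subgroup (G ⧸ N)).lowerCentralSeries n = ⊥ := by
          rw [← RFAux.lcs_map_eq σ hσsurj n, ih, Subgroup.map_bot]
        have := RFAux.lcs_map_eq q hqsurj n
        rw [hQ, Subgroup.map_eq_bot_iff] at this
        rwa [QuotientGroup.ker_mk'] at this
      -- Step 2: γ_n(G) is central.
      have hcentral : (⊤ : Subgroup G).lowerCentralSeries n ≤ Subgroup.centralizer ⊤ := by
        intro z hz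
        rw [Subgroup.mem_centralizer_iff]
        intro g _
        have hg : g ∈ Subgroup.closure (Set.range (PresentedGroup.of :
            Fin (n + 1) → G)) := by
          rw [PresentedGroup.closure_range_of]; trivial
        have : Subgroup.closure (Set.range (PresentedGroup.of : Fin (n + 1) → G)) ≤
            Subgroup.centralizer {z} := by
          rw [Subgroup.closure_le]
          rintro _ ⟨i, rfl⟩
          have hzc : z ∈ Subgroup.centralizer {(PresentedGroup.of i : G)} :=
            RFAux.normalClosure_le_centralizer i (key i hz)
          show PresentedGroup.of i ∈ Subgroup.centralizer {z}
          rw [Subgroup.mem_centralizer_iff] at hzc ⊢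
          intro y hy
          rw [Set.mem_singleton_iff] at hy
          subst hy
          exact (hzc (PresentedGroup.of i) rfl).symm
        have := this hg
        rw [Subgroup.mem_centralizer_iff] at this
        exact (this z rfl).symm
      show (⁅(⊤ : Subgroup G).lowerCentralSeries n, (⊤ : Subgroup G)⁆ : Subgroup G) = ⊥
      rw [Subgroup.commutator_eq_bot_iff_le_centralizer]
      exact hcentral
end

section
/- The reduced free group RF(2) on generators x_1, x_2 is isomorphic to the discrete Heisenberg group: it is generated by x_1, x_2 with [x_1,x_2] central, and it is nilpotent of class 2 with center containing [x_1, x_2]. -/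
open scoped commutatorElement

namespace RFAux

local notation "G" => ReducedFreeGroup 2

lemma key (i : Fin 2) (h : G) :
    Commute (PresentedGroup.of (rels := rfRels 2) i) (h * PresentedGroup.of i * h⁻¹) := by
  obtain ⟨g, rfl⟩ := PresentedGroup.mk_surjective (rfRels 2) h
  have hr : (⁅FreeGroup.of i, g * FreeGroup.of i * g⁻¹⁆ : FreeGroup (Fin 2)) ∈
      Subgroup.normalClosure (rfRels 2) :=
    Subgroup.subset_normalClosure ⟨i, g, rfl⟩
  have : PresentedGroup.mk (rfRels 2) ⁅FreeGroup.of i, g * FreeGroup.of i * g⁻¹⁆ = 1 :=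
    (QuotientGroup.eq_one_iff _).mpr hr
  rw [map_commutatorElement] at this
  simpa [commutatorElement_eq_one_iff_commute, PresentedGroup.of] using this

lemma key' (i : Fin 2) (h : G) :
    Commute (PresentedGroup.of (rels := rfRels 2) i) (h * (PresentedGroup.of i)⁻¹ * h⁻¹) := by
  have := (key i h).inv_right
  simpa [mul_assoc] using this

local notation "x₀" => PresentedGroup.of (rels := rfRels 2) 0
local notation "x₁" => PresentedGroup.of (rels := rfRels 2) 1

lemma gen : Subgroup.closure {(x₀ : G), x₁} = ⊤ := by
  have h := PresentedGroup.closure_range_of (rfRels 2)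
  have hr : Set.range (PresentedGroup.of : Fin 2 → G) = {(x₀ : G), x₁} := by
    ext y; simp [Fin.exists_fin_two, eq_comm]
  rwa [hr] at h

lemma comm0 : Commute (x₀ : G) ⁅(x₀ : G), x₁⁆ := by
  have h := (Commute.refl (x₀ : G)).mul_right (key' 0 x₁)
  simpa [commutatorElement_def, mul_assoc] using h

lemma comm1 : Commute (x₁ : G) ⁅(x₀ : G), x₁⁆ := by
  have h := (key 1 x₀).mul_right ((Commute.refl (x₁ : G)).inv_right)
  simpa [commutatorElement_def, mul_assoc] using h

lemma central : ⁅(x₀ : G), x₁⁆ ∈ Subgroup.center G := by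
  rw [Subgroup.mem_center_iff]
  intro g
  have hg : g ∈ Subgroup.centralizer {⁅(x₀ : G), x₁⁆} := by
    have hle : Subgroup.closure {(x₀ : G), x₁} ≤ Subgroup.centralizer {⁅(x₀ : G), x₁⁆} := by
      rw [Subgroup.closure_le]
      rintro y (rfl | rfl) <;>
        rw [SetLike.mem_coe, Subgroup.mem_centralizer_singleton_iff] <;>
        [exact comm0; exact comm1]
    exact hle (by rw [gen]; trivial)
  exact Subgroup.mem_centralizer_singleton_iff.mp hg

abbrev π : G →* G ⧸ Subgroup.center G := QuotientGroup.mk' _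

lemma quot_comm : ∀ a b : G ⧸ Subgroup.center G, a * b = b * a := by
  intro p q
  set S : Set (G ⧸ Subgroup.center G) := {π x₀, π x₁} with hS
  have hclos : Subgroup.closure S = ⊤ := by
    have h1 : Subgroup.map π (Subgroup.closure {(x₀ : G), x₁}) = Subgroup.closure S := by
      rw [MonoidHom.map_closure]; congr 1
      simp [hS, Set.image_insert_eq]
    have h2 : Subgroup.map π (⊤ : Subgroup G) = ⊤ :=
      Subgroup.map_top_of_surjective _ (QuotientGroup.mk'_surjective _)
    rw [gen] at h1; rw [← h1, h2]
  have hcommS : ∀ x ∈ S, ∀ y ∈ S, x * y = y * x := by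
    have h01 : π x₀ * π x₁ = π x₁ * π x₀ := by
      have : π ⁅(x₀ : G), x₁⁆ = 1 := by
        rw [← MonoidHom.mem_ker, QuotientGroup.ker_mk']; exact central
      rw [map_commutatorElement] at this
      exact (commutatorElement_eq_one_iff_commute.mp this)
    rintro x (rfl | rfl) y (rfl | rfl) <;> first | rfl | exact h01 | exact h01.symm
  have hsub : S ⊆ Subgroup.center (G ⧸ Subgroup.center G) := by
    rw [← Subgroup.centralizer_eq_top_iff_subset]
    rw [eq_top_iff, ← hclos, Subgroup.closure_le]
    intro y hy
    rw [SetLike.mem_coe, Subgroup.mem_centralizer_iff]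
    intro z hz
    exact hcommS z hz y hy
  have : Subgroup.center (G ⧸ Subgroup.center G) = ⊤ := by
    rw [eq_top_iff, ← hclos, Subgroup.closure_le]; exact hsub
  have hp : p ∈ Subgroup.center _ := by rw [this]; trivial
  exact (Subgroup.mem_center_iff.mp hp q).symm

lemma commutator_le_center : commutator G ≤ Subgroup.center G := by
  rw [commutator_def, Subgroup.commutator_le]
  intro a _ b _
  have : π ⁅a, b⁆ = 1 := by
    rw [map_commutatorElement, commutatorElement_eq_one_iff_commute]
    exact quot_comm _ _
  rwa [← QuotientGroup.ker_mk' (Subgroup.center G), MonoidHom.mem_ker]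

/-- The map to the quaternion group. -/
def f : Fin 2 → QuaternionGroup 2 := ![QuaternionGroup.xa 0, QuaternionGroup.a 1]

lemma frels : ∀ r ∈ rfRels 2, FreeGroup.lift f r = 1 := by
  rintro r ⟨i, g, rfl⟩
  rw [map_commutatorElement]
  simp only [map_mul, map_inv, FreeGroup.lift_apply_of]
  generalize FreeGroup.lift f g = y
  revert y
  revert i
  decide

noncomputable abbrev φ : G →* QuaternionGroup 2 := PresentedGroup.toGroup frels

lemma comm_ne_one : ⁅(x₀ : G), x₁⁆ ≠ 1 := by
  intro h
  have : φ ⁅(x₀ : G), x₁⁆ = 1 := by rw [h, map_one]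
  rw [map_commutatorElement, PresentedGroup.toGroup.of, PresentedGroup.toGroup.of] at this
  revert this
  decide

end RFAux

/-- The reduced free group `RF(2)` is the discrete Heisenberg group:
it is generated by `x_1, x_2`, the commutator `[x_1,x_2]` is central, and it is
nilpotent of class exactly `2`. -/
theorem reducedFreeGroup_two_heisenberg :
    Subgroup.closure {PresentedGroup.of (rels := rfRels 2) 0, PresentedGroup.of 1} = ⊤ ∧
    ⁅PresentedGroup.of (rels := rfRels 2) 0, PresentedGroup.of 1⁆ ∈
      Subgroup.center (ReducedFreeGroup 2) ∧
    (⊤ : Subgroup (ReducedFreeGroup 2)).lowerCentralSeries 2 = ⊥ ∧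
    (⊤ : Subgroup (ReducedFreeGroup 2)).lowerCentralSeries 1 ≠ ⊥ := by
  refine ⟨RFAux.gen, RFAux.central, ?_, ?_⟩
  · exact Subgroup.lowerCentralSeries_succ_eq_bot ⊤
      (by rw [Subgroup.top_lowerCentralSeries_one]; exact RFAux.commutator_le_center)
  · intro h
    rw [Subgroup.top_lowerCentralSeries_one] at h
    have hmem : ⁅PresentedGroup.of (rels := rfRels 2) 0, PresentedGroup.of 1⁆ ∈
        commutator (ReducedFreeGroup 2) :=
      Subgroup.commutator_mem_commutator (Subgroup.mem_top _) (Subgroup.mem_top _)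
    rw [h, Subgroup.mem_bot] at hmem
    exact RFAux.comm_ne_one hmem
end

section
/- Let A be the normal closure of a subset S of generators in the free group F(n). Then every term (monomial with nonzero coefficient, other than the constant term 1) in the Magnus expansion of any element of the commutator subgroup [A, A] contains at least two occurrences of variables X_s with s ∈ S (counted with multiplicity, possibly the same variable twice). -/
/-- The ring `ℤ⟨⟨X_1,…,X_n⟩⟩` of formal power series in `n` non-commuting variables with
integer coefficients, realized as coefficient functions on words in the variables. -/
def NC (n : ℕ) : Type := List (Fin n) → ℤ

namespace NC

variable {n : ℕ}

instance : AddCommGroup (NC n) := Pi.addCommGroup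

instance : One (NC n) := ⟨fun w => if w = [] then 1 else 0⟩

/-- Convolution (Cauchy) product of non-commutative power series. -/
instance : Mul (NC n) :=
  ⟨fun f g w => ∑ k ∈ Finset.range (w.length + 1), f (w.take k) * g (w.drop k)⟩

theorem mul_apply (f g : NC n) (w : List (Fin n)) :
    (f * g) w = ∑ k ∈ Finset.range (w.length + 1), f (w.take k) * g (w.drop k) := rfl

theorem one_apply (w : List (Fin n)) : (1 : NC n) w = if w = [] then 1 else 0 := rfl

theorem zero_apply (w : List (Fin n)) : (0 : NC n) w = 0 := rfl

theorem add_apply (f g : NC n) (w : List (Fin n)) : (f + g) w = f w + g w := rfl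

protected theorem mul_assoc (f g h : NC n) : f * g * h = f * (g * h) := by
  funext w
  rw [mul_apply, mul_apply]
  calc
    ∑ j ∈ Finset.range (w.length + 1), (f * g) (w.take j) * h (w.drop j)
        = ∑ j ∈ Finset.range (w.length + 1), ∑ i ∈ Finset.range (j + 1),
            f (w.take i) * g ((w.drop i).take (j - i)) * h (w.drop j) := by
          refine Finset.sum_congr rfl ?_
          intro j hj
          simp only [Finset.mem_range] at hj
          rw [mul_apply, Finset.sum_mul]
          have hlen : (w.take j).length = j := by rw [List.length_take]; omega
          rw [hlen]
          refine Finset.sum_congr rfl ?_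
          intro i hi
          simp only [Finset.mem_range] at hi
          have h1 : (w.take j).take i = w.take i := by
            rw [List.take_take]; congr 1; omega
          have h2 : (w.take j).drop i = (w.drop i).take (j - i) := List.drop_take
          rw [h1, h2]
    _ = ∑ i ∈ Finset.range (w.length + 1), ∑ k ∈ Finset.range ((w.length - i) + 1),
            f (w.take i) * g ((w.drop i).take k) * h (w.drop (i + k)) := by
          rw [Finset.sum_sigma', Finset.sum_sigma']
          refine Finset.sum_nbij' (fun p => ⟨p.2, p.1 - p.2⟩) (fun q => ⟨q.1 + q.2, q.1⟩)
            ?_ ?_ ?_ ?_ ?_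
          · rintro ⟨j, i⟩ hp
            simp only [Finset.mem_sigma, Finset.mem_range] at hp ⊢
            omega
          · rintro ⟨i, k⟩ hq
            simp only [Finset.mem_sigma, Finset.mem_range] at hq ⊢
            omega
          · rintro ⟨j, i⟩ hp
            simp only [Finset.mem_sigma, Finset.mem_range] at hp
            have hji : i + (j - i) = j := by omega
            simp [hji]
          · rintro ⟨i, k⟩ hq
            simp only [Finset.mem_sigma, Finset.mem_range] at hq
            have hik : i + k - i = k := by omega
            simp [hik]
          · rintro ⟨j, i⟩ hp
            simp only [Finset.mem_sigma, Finset.mem_range] at hp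
            have : i + (j - i) = j := by omega
            rw [this]
    _ = ∑ i ∈ Finset.range (w.length + 1), f (w.take i) * (g * h) (w.drop i) := by
          refine Finset.sum_congr rfl ?_
          intro i hi
          simp only [Finset.mem_range] at hi
          rw [mul_apply, Finset.mul_sum]
          have hlen : (w.drop i).length = w.length - i := by rw [List.length_drop]
          rw [hlen]
          refine Finset.sum_congr rfl ?_
          intro k hk
          rw [List.drop_drop]
          ring_nf

protected theorem one_mul (f : NC n) : 1 * f = f := by
  funext w
  rw [mul_apply]
  rw [Finset.sum_eq_single 0]
  · simp [one_apply]
  · intro b hb hb0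
    rw [one_apply]
    rw [if_neg, zero_mul]
    intro hnil
    rcases List.take_eq_nil_iff.mp hnil with h | h
    · exact hb0 h
    · subst h; simp at hb; exact hb0 hb
  · intro h; simp at h

protected theorem mul_one (f : NC n) : f * 1 = f := by
  funext w
  rw [mul_apply]
  rw [Finset.sum_eq_single w.length]
  · simp [one_apply]
  · intro b hb hbne
    rw [one_apply, if_neg, mul_zero]
    intro hnil
    have := List.drop_eq_nil_iff.mp hnil
    simp at hb
    omega
  · intro h; simp at h

instance instRing : Ring (NC n) where
  __ := (inferInstance : AddCommGroup (NC n))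
  mul := (· * ·)
  one := 1
  mul_assoc := NC.mul_assoc
  one_mul := NC.one_mul
  mul_one := NC.mul_one
  left_distrib f g h := by
    funext w
    simp [mul_apply, add_apply, mul_add, Finset.sum_add_distrib]
  right_distrib f g h := by
    funext w
    simp [mul_apply, add_apply, add_mul, Finset.sum_add_distrib]
  zero_mul f := by
    funext w
    simp [mul_apply, zero_apply]
  mul_zero f := by
    funext w
    simp [mul_apply, zero_apply]

/-- The variable `X_i` as a power series. -/
def X (i : Fin n) : NC n := fun w => if w = [i] then 1 else 0

/-- The geometric series `1 - X_i + X_i² - X_i³ + ⋯`. -/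
def geom (i : Fin n) : NC n :=
  fun w => if ∀ j ∈ w, j = i then (-1) ^ w.length else 0

theorem val_inv (i : Fin n) : (1 + X i) * geom i = 1 := by
  funext w
  rw [mul_apply]
  cases w with
  | nil => simp [one_apply, add_apply, X, geom]
  | cons a t =>
    rw [one_apply, if_neg (by simp)]
    rw [Finset.sum_eq_add 0 1 (by omega)]
    · have h0 : ((a :: t).take 0) = ([] : List (Fin n)) := rfl
      have h1 : ((a :: t).take 1) = [a] := rfl
      rw [h0, h1]
      simp only [List.drop_zero, List.drop_one]
      by_cases hai : a = i
      · subst hai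
        simp only [add_apply, one_apply, X, geom]
        by_cases ht : ∀ j ∈ t, j = a
        · simp [ht, pow_succ]
          convert neg_add_cancel ((-1 : ℤ) ^ t.length) using 2 <;> exact if_pos ht
        · have hat : ¬ ∀ j ∈ (a :: t), j = a := by simp [ht]
          simp [ht, hat]
      · simp only [add_apply, one_apply, X, geom]
        have h2 : ¬ ∀ j ∈ (a :: t), j = i := by
          intro hc; exact hai (hc a (by simp))
        have h3 : ¬ ([a] = [i]) := by simp [hai]
        simp [h2, h3]
        exact fun hc => absurd hc hai
    · intro c hc ⟨hc0, hc1⟩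
      simp only [Finset.mem_range, List.length_cons] at hc
      have : ((a :: t).take c) ≠ [] ∧ ((a :: t).take c) ≠ [i] := by
        constructor
        · simp [List.take_eq_nil_iff, hc0]
        · intro hcon
          have := congrArg List.length hcon
          simp [List.length_take] at this
          omega
      simp [add_apply, one_apply, X, this.1, this.2]
    · intro h; simp at h
    · intro h; simp at h

theorem inv_val (i : Fin n) : geom i * (1 + X i) = 1 := by
  funext w
  rw [mul_apply]
  rcases List.eq_nil_or_concat w with hw | ⟨t, a, hw⟩
  · subst hw; simp [one_apply, add_apply, X, geom]
  · rw [List.concat_eq_append] at hw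
    subst hw
    rw [one_apply, if_neg (by simp)]
    have hlen : (t ++ [a]).length = t.length + 1 := by simp
    rw [Finset.sum_eq_add t.length (t.length + 1) (by omega)]
    · have h1 : (t ++ [a]).take t.length = t := List.take_left
      have h2 : (t ++ [a]).drop t.length = [a] := List.drop_left
      have h3 : (t ++ [a]).take (t.length + 1) = t ++ [a] := by
        rw [List.take_of_length_le (by simp)]
      have h4 : (t ++ [a]).drop (t.length + 1) = [] := by
        rw [List.drop_of_length_le (by simp)]
      rw [h1, h2, h3, h4]
      have e1 : ((1 : NC n) + X i) [a] = if a = i then 1 else 0 := by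
        by_cases h : a = i <;> simp [add_apply, one_apply, X, h]
      have e2 : ((1 : NC n) + X i) [] = 1 := by
        simp [add_apply, one_apply, X]
      rw [e1, e2, mul_one]
      by_cases ha : a = i
      · rw [if_pos ha, mul_one]
        by_cases ht : ∀ j ∈ t, j = i
        · have hw' : ∀ j ∈ t ++ [a], j = i := by
            intro j hj
            rcases List.mem_append.mp hj with h | h
            · exact ht j h
            · simp only [List.mem_singleton] at h
              rw [h, ha]
          simp only [geom, if_pos ht, if_pos hw', hlen, pow_succ]
          ring
        · have hw' : ¬ ∀ j ∈ t ++ [a], j = i :=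
            fun hc => ht fun j hj => hc j (List.mem_append_left _ hj)
          simp only [geom, if_neg ht, if_neg hw']
          ring
      · rw [if_neg ha, mul_zero, zero_add]
        have hw' : ¬ ∀ j ∈ t ++ [a], j = i :=
          fun hc => ha (hc a (List.mem_append_right t (by simp)))
        simp only [geom, if_neg hw']
    · intro c hc ⟨hc0, hc1⟩
      simp only [Finset.mem_range, hlen] at hc
      have hne : ((t ++ [a]).drop c) ≠ [] ∧ ((t ++ [a]).drop c) ≠ [i] := by
        constructor
        · intro hcon
          have := congrArg List.length hcon
          simp at this
          omega
        · intro hcon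
          have := congrArg List.length hcon
          simp at this
          omega
      simp [add_apply, one_apply, X, hne.1, hne.2]
    · intro h
      exact absurd (by simp only [Finset.mem_range, hlen]; omega) h
    · intro h
      exact absurd (by simp only [Finset.mem_range, hlen]; omega) h

/-- `1 + X_i` as a unit of `ℤ⟨⟨X_1,…,X_n⟩⟩`, with inverse `1 - X_i + X_i² - ⋯`. -/
def magnusUnit (i : Fin n) : (NC n)ˣ where
  val := 1 + X i
  inv := geom i
  val_inv := val_inv i
  inv_val := inv_val i

end NC

/-- The Magnus expansion `F(n) → ℤ⟨⟨X_1,…,X_n⟩⟩ˣ`, `x_i ↦ 1 + X_i`. -/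
def magnus (n : ℕ) : FreeGroup (Fin n) →* (NC n)ˣ := FreeGroup.lift NC.magnusUnit

/-- The coefficient of the monomial `X_{u 0} ⋯ X_{u k}` in the Magnus expansion of `w`. -/
def magnusCoeff {n : ℕ} (w : FreeGroup (Fin n)) (u : List (Fin n)) : ℤ :=
  ((magnus n w : (NC n)ˣ) : NC n) u

section Aux

variable {n : ℕ}

/-- `f` lies in the `k`-th piece of the `S`-filtration: all coefficients on words with
fewer than `k` occurrences of variables from `S` vanish. -/
def inJ (S : Finset (Fin n)) (k : ℕ) (f : NC n) : Prop :=
  ∀ u : List (Fin n), u.countP (fun j => decide (j ∈ S)) < k → f u = 0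

theorem inJ_zero (S : Finset (Fin n)) (k : ℕ) : inJ S k (0 : NC n) := fun _ _ => rfl

theorem inJ_top (S : Finset (Fin n)) (f : NC n) : inJ S 0 f :=
  fun _ h => absurd h (Nat.not_lt_zero _)

theorem inJ_mono {S : Finset (Fin n)} {k m : ℕ} (h : k ≤ m) {f : NC n} (hf : inJ S m f) :
    inJ S k f := fun u hu => hf u (lt_of_lt_of_le hu h)

theorem inJ_add {S : Finset (Fin n)} {k : ℕ} {f g : NC n} (hf : inJ S k f) (hg : inJ S k g) :
    inJ S k (f + g) := fun u hu => by rw [NC.add_apply, hf u hu, hg u hu, add_zero]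

theorem inJ_neg {S : Finset (Fin n)} {k : ℕ} {f : NC n} (hf : inJ S k f) : inJ S k (-f) :=
  fun u hu => by show -(f u) = 0; rw [hf u hu, neg_zero]

theorem inJ_sub {S : Finset (Fin n)} {k : ℕ} {f g : NC n} (hf : inJ S k f) (hg : inJ S k g) :
    inJ S k (f - g) := by
  rw [sub_eq_add_neg]; exact inJ_add hf (inJ_neg hg)

theorem inJ_mul {S : Finset (Fin n)} {k m : ℕ} {f g : NC n} (hf : inJ S k f)
    (hg : inJ S m g) : inJ S (k + m) (f * g) := by
  intro u hu
  rw [NC.mul_apply]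
  refine Finset.sum_eq_zero fun i _ => ?_
  have hsplit : (u.take i).countP (fun j => decide (j ∈ S)) +
      (u.drop i).countP (fun j => decide (j ∈ S)) = u.countP (fun j => decide (j ∈ S)) := by
    rw [← List.countP_append, List.take_append_drop]
  by_cases h : (u.take i).countP (fun j => decide (j ∈ S)) < k
  · rw [hf _ h, zero_mul]
  · rw [hg _ (by omega), mul_zero]

theorem inJ_mul_left {S : Finset (Fin n)} {k : ℕ} (f : NC n) {g : NC n} (hg : inJ S k g) :
    inJ S k (f * g) := inJ_mono (by omega) (inJ_mul (inJ_top S f) hg)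

theorem inJ_mul_right {S : Finset (Fin n)} {k : ℕ} {f : NC n} (hf : inJ S k f) (g : NC n) :
    inJ S k (f * g) := inJ_mono (by omega) (inJ_mul hf (inJ_top S g))

/-- The subgroup of elements of the free group whose Magnus expansion is `1` modulo the
`k`-th piece of the `S`-filtration. -/
def Hgrp (S : Finset (Fin n)) (k : ℕ) : Subgroup (FreeGroup (Fin n)) where
  carrier := {w | inJ S k (((magnus n w : (NC n)ˣ) : NC n) - 1)}
  one_mem' := by
    simp only [Set.mem_setOf_eq, map_one, Units.val_one, sub_self]
    exact inJ_zero S k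
  mul_mem' := by
    intro a b ha hb
    simp only [Set.mem_setOf_eq, map_mul, Units.val_mul] at *
    set A := ((magnus n a : (NC n)ˣ) : NC n)
    set B := ((magnus n b : (NC n)ˣ) : NC n)
    have key : A * B - 1 = (A - 1) * (B - 1) + (A - 1) + (B - 1) := by noncomm_ring
    rw [key]
    exact inJ_add (inJ_add (inJ_mono (by omega) (inJ_mul ha hb)) ha) hb
  inv_mem' := by
    intro a ha
    simp only [Set.mem_setOf_eq, map_inv] at *
    set A := ((magnus n a : (NC n)ˣ) : NC n)
    set A' := (((magnus n a)⁻¹ : (NC n)ˣ) : NC n)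
    have hA : A' * A = 1 := Units.inv_mul _
    have key : A' - 1 = -(A' * (A - 1)) := by
      have h1 : A' * (A - 1) = A' * A - A' := by noncomm_ring
      rw [h1, hA]; noncomm_ring
    rw [key]
    exact inJ_neg (inJ_mul_left A' ha)

theorem mem_Hgrp {S : Finset (Fin n)} {k : ℕ} {w : FreeGroup (Fin n)} :
    w ∈ Hgrp S k ↔ inJ S k (((magnus n w : (NC n)ˣ) : NC n) - 1) := Iff.rfl

theorem Hgrp_normal (S : Finset (Fin n)) (k : ℕ) : (Hgrp S k).Normal := by
  constructor
  intro a ha g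
  have ha' : inJ S k (((magnus n a : (NC n)ˣ) : NC n) - 1) := ha
  rw [mem_Hgrp]
  have hval : ((magnus n (g * a * g⁻¹) : (NC n)ˣ) : NC n) =
      ((magnus n g : (NC n)ˣ) : NC n) * ((magnus n a : (NC n)ˣ) : NC n) *
        (((magnus n g)⁻¹ : (NC n)ˣ) : NC n) := by
    simp [map_mul, map_inv, Units.val_mul]
  rw [hval]
  set G := ((magnus n g : (NC n)ˣ) : NC n)
  set A := ((magnus n a : (NC n)ˣ) : NC n)
  set G' := (((magnus n g)⁻¹ : (NC n)ˣ) : NC n)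
  have hGG : G * G' = 1 := Units.mul_inv _
  have key : G * (A - 1) * G' = G * A * G' - G * G' := by noncomm_ring
  rw [hGG] at key
  rw [← key]
  exact inJ_mul_right (inJ_mul_left G ha') G'

open scoped commutatorElement in
theorem comm_mem_Hgrp {S : Finset (Fin n)} {a b : FreeGroup (Fin n)}
    (ha : a ∈ Hgrp S 1) (hb : b ∈ Hgrp S 1) : ⁅a, b⁆ ∈ Hgrp S 2 := by
  have ha' : inJ S 1 (((magnus n a : (NC n)ˣ) : NC n) - 1) := ha
  have hb' : inJ S 1 (((magnus n b : (NC n)ˣ) : NC n) - 1) := hb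
  rw [mem_Hgrp]
  have hval : ((magnus n ⁅a, b⁆ : (NC n)ˣ) : NC n) =
      ((magnus n a : (NC n)ˣ) : NC n) * ((magnus n b : (NC n)ˣ) : NC n) *
        (((magnus n a)⁻¹ : (NC n)ˣ) : NC n) * (((magnus n b)⁻¹ : (NC n)ˣ) : NC n) := by
    simp [commutatorElement_def, map_mul, map_inv, Units.val_mul]
  rw [hval]
  set A := ((magnus n a : (NC n)ˣ) : NC n)
  set B := ((magnus n b : (NC n)ˣ) : NC n)
  set A' := (((magnus n a)⁻¹ : (NC n)ˣ) : NC n)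
  set B' := (((magnus n b)⁻¹ : (NC n)ˣ) : NC n)
  have hA : A * A' = 1 := Units.mul_inv _
  have hB : B * B' = 1 := Units.mul_inv _
  have key : ((A - 1) * (B - 1) - (B - 1) * (A - 1)) * (A' * B') =
      A * B * A' * B' - B * (A * A') * B' := by noncomm_ring
  rw [hA, mul_one, hB] at key
  rw [← key]
  exact inJ_mul_right (inJ_sub (inJ_mono (by omega) (inJ_mul ha' hb'))
    (inJ_mono (by omega) (inJ_mul hb' ha'))) (A' * B')

theorem of_mem_Hgrp {S : Finset (Fin n)} {s : Fin n} (hs : s ∈ S) :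
    FreeGroup.of s ∈ Hgrp S 1 := by
  rw [mem_Hgrp]
  have hval : magnus n (FreeGroup.of s) = NC.magnusUnit s := FreeGroup.lift_apply_of
  rw [hval]
  have : ((NC.magnusUnit s : (NC n)ˣ) : NC n) - 1 = NC.X s := by
    show (1 + NC.X s) - 1 = NC.X s
    rw [add_sub_cancel_left]
  rw [this]
  intro u hu
  show (if u = [s] then (1 : ℤ) else 0) = 0
  rw [if_neg]
  intro h
  subst h
  simp [List.countP_cons, hs] at hu

end Aux

/-- Let `A` be the normal closure of `{x_s : s ∈ S}` in the free group `F(n)`.  Every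
non-constant term with nonzero coefficient in the Magnus expansion of an element of the
commutator subgroup `[A,A]` contains at least two occurrences (counted with multiplicity)
of variables `X_s` with `s ∈ S`. -/
theorem magnus_commutator_normalClosure (n : ℕ) (S : Finset (Fin n))
    (w : FreeGroup (Fin n))
    (hw : w ∈ ⁅Subgroup.normalClosure (FreeGroup.of '' (S : Set (Fin n))),
               Subgroup.normalClosure (FreeGroup.of '' (S : Set (Fin n)))⁆) :
    ∀ u : List (Fin n), u ≠ [] → magnusCoeff w u ≠ 0 →
      2 ≤ u.countP (fun j => decide (j ∈ S)) := by
  intro u hne hcoeff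
  by_contra hlt
  push_neg at hlt
  have h1 : Subgroup.normalClosure (FreeGroup.of '' (S : Set (Fin n))) ≤ Hgrp S 1 := by
    haveI := Hgrp_normal (n := n) S 1
    apply Subgroup.normalClosure_le_normal
    rintro x ⟨s, hs, rfl⟩
    exact of_mem_Hgrp hs
  have h2 : ⁅Subgroup.normalClosure (FreeGroup.of '' (S : Set (Fin n))),
      Subgroup.normalClosure (FreeGroup.of '' (S : Set (Fin n)))⁆ ≤ Hgrp S 2 :=
    Subgroup.commutator_le.mpr fun a ha b hb =>
      comm_mem_Hgrp (h1 ha) (h1 hb)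
  have hm : inJ S 2 (((magnus n w : (NC n)ˣ) : NC n) - 1) := h2 hw
  have hval : ((magnus n w : (NC n)ˣ) : NC n) u - (1 : NC n) u = 0 := hm u hlt
  rw [NC.one_apply, if_neg hne, sub_zero] at hval
  exact hcoeff hval
end
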